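/- (Continuous convergence bound for WR with variable splittings.) Suppose the continuous WR errors satisfy e^{(k+1)}(t) = K^{(k+1)}(t) e^{(k)}(t) + \int_0^t Kc^{(k+1)}(s) e^{(k)}(s) ds for t in [0,T], with e^{(k+1)}(0)=0. Let Kmax(t) := sup_k sup_{s in [0,t]} ||K^{(k)}(s)|| and Kcmax(t) := sup_k sup_{s in [0,t]} ||Kc^{(k)}(s)||, assumed finite. Then for all k, sup_{s in [0,t]} ||e^{(k)}(s)|| <= ( sum_{j=0}^k binom(k,j) Kmax(t)^{k-j} Kcmax(t)^j t^j / j! ) * sup_{s in [0,t]} ||e^{(0)}(s)||. -/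

import Mathlib

attribute [local instance] Matrix.linftyOpNormedRing

open intervalIntegral

lemma wr_aux_id (a b s : ℝ) (k : ℕ) :
    (∑ j ∈ Finset.range (k + 2),
        ((k+1).choose j : ℝ) * a ^ (k + 1 - j) * b ^ j * s ^ j / (j.factorial : ℝ))
    = a * (∑ j ∈ Finset.range (k + 1),
        (k.choose j : ℝ) * a ^ (k - j) * b ^ j * s ^ j / (j.factorial : ℝ))
    + ∑ j ∈ Finset.range (k + 1),
        (k.choose j : ℝ) * a ^ (k - j) * b ^ (j+1) * s ^ (j+1) / ((j+1).factorial : ℝ) := by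
  rw [Finset.sum_range_succ' _ (k + 1)]
  have h1 : ∀ i ∈ Finset.range (k+1),
      ((k+1).choose (i+1) : ℝ) * a ^ (k + 1 - (i+1)) * b ^ (i+1) * s ^ (i+1) / ((i+1).factorial : ℝ)
      = ((k.choose (i+1) : ℝ) * a ^ (k - i) * b ^ (i+1) * s ^ (i+1) / ((i+1).factorial : ℝ))
        + (k.choose i : ℝ) * a ^ (k - i) * b ^ (i+1) * s ^ (i+1) / ((i+1).factorial : ℝ) := by
    intro i _
    rw [Nat.choose_succ_succ, Nat.succ_sub_succ]
    push_cast
    ring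
  rw [Finset.sum_congr rfl h1, Finset.sum_add_distrib]
  have h2 : (∑ i ∈ Finset.range (k+1),
      (k.choose (i+1) : ℝ) * a ^ (k - i) * b ^ (i+1) * s ^ (i+1) / ((i+1).factorial : ℝ))
      + ((k+1).choose 0 : ℝ) * a ^ (k + 1 - 0) * b ^ 0 * s ^ 0 / ((0:ℕ).factorial : ℝ)
      = a * ∑ j ∈ Finset.range (k + 1),
        (k.choose j : ℝ) * a ^ (k - j) * b ^ j * s ^ j / (j.factorial : ℝ) := by
    rw [Finset.sum_range_succ, Finset.sum_range_succ' _ k, mul_add, Finset.mul_sum]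
    have h3 : ∀ i ∈ Finset.range k,
        a * ((k.choose (i+1) : ℝ) * a ^ (k - (i+1)) * b ^ (i+1) * s ^ (i+1) / ((i+1).factorial : ℝ))
        = (k.choose (i+1) : ℝ) * a ^ (k - i) * b ^ (i+1) * s ^ (i+1) / ((i+1).factorial : ℝ) := by
      intro i hi
      rw [Finset.mem_range] at hi
      rw [show k - i = (k - (i+1)) + 1 by omega, pow_succ]
      ring
    rw [Finset.sum_congr rfl h3]
    simp [Nat.choose_succ_self, pow_succ]
    ring
  rw [add_right_comm, h2]


/-- continuous convergence bound for WR with variable splittings.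
If `e^{(k+1)}(t) = K^{(k+1)}(t) e^{(k)}(t) + ∫_0^t Kc^{(k+1)}(s) e^{(k)}(s) ds` on `[0,T]`
with `e^{(k+1)}(0) = 0`, and `Kmax, Kcmax` bound `‖K^{(k)}‖, ‖Kc^{(k)}‖` on `[0,t]`
uniformly in `k`, then
`sup_{[0,t]} ‖e^{(k)}‖ ≤ (∑_{j=0}^k (k choose j) Kmax^{k-j} Kcmax^j t^j / j!) ⬝ sup_{[0,t]} ‖e^{(0)}‖`. -/
theorem continuous_WR_variable_splitting_bound (d : ℕ) (T : ℝ) (hT : 0 ≤ T)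
    (e : ℕ → ℝ → (Fin d → ℝ))
    (K Kc : ℕ → ℝ → Matrix (Fin d) (Fin d) ℝ)
    (hint : ∀ k : ℕ, ∀ t ∈ Set.Icc (0 : ℝ) T,
      IntervalIntegrable (fun s => (Kc (k + 1) s).mulVec (e k s)) MeasureTheory.volume 0 t)
    (hrec : ∀ k : ℕ, ∀ t ∈ Set.Icc (0 : ℝ) T,
      e (k + 1) t = (K (k + 1) t).mulVec (e k t) +
        ∫ s in (0 : ℝ)..t, (Kc (k + 1) s).mulVec (e k s))
    (hzero : ∀ k : ℕ, e (k + 1) 0 = 0) :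
    ∀ t ∈ Set.Icc (0 : ℝ) T, ∀ Kmax Kcmax E0 : ℝ,
      (∀ k : ℕ, ∀ s ∈ Set.Icc (0 : ℝ) t, ‖K k s‖ ≤ Kmax) →
      (∀ k : ℕ, ∀ s ∈ Set.Icc (0 : ℝ) t, ‖Kc k s‖ ≤ Kcmax) →
      (∀ s ∈ Set.Icc (0 : ℝ) t, ‖e 0 s‖ ≤ E0) →
      ∀ k : ℕ, ∀ s ∈ Set.Icc (0 : ℝ) t,
        ‖e k s‖ ≤
          (∑ j ∈ Finset.range (k + 1),
            (k.choose j : ℝ) * Kmax ^ (k - j) * Kcmax ^ j * t ^ j / (j.factorial : ℝ)) * E0 := by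
  intro t ht Kmax Kcmax E0 hK hKc hE0
  obtain ⟨ht0, htT⟩ := ht
  have hKm0 : 0 ≤ Kmax := le_trans (norm_nonneg _) (hK 0 0 ⟨le_rfl, ht0⟩)
  have hKc0 : 0 ≤ Kcmax := le_trans (norm_nonneg _) (hKc 0 0 ⟨le_rfl, ht0⟩)
  have hE00 : 0 ≤ E0 := le_trans (norm_nonneg _) (hE0 0 ⟨le_rfl, ht0⟩)
  set F : ℕ → ℝ → ℝ := fun k s =>
    (∑ j ∈ Finset.range (k + 1),
      (k.choose j : ℝ) * Kmax ^ (k - j) * Kcmax ^ j * s ^ j / (j.factorial : ℝ)) * E0 with hF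
  have key : ∀ k : ℕ, ∀ s ∈ Set.Icc (0:ℝ) t, ‖e k s‖ ≤ F k s := by
    intro k
    induction k with
    | zero =>
      intro s hs
      simpa [hF] using hE0 s hs
    | succ k ih =>
      intro s hs
      obtain ⟨hs0, hst⟩ := hs
      have hsT : s ∈ Set.Icc (0:ℝ) T := ⟨hs0, hst.trans htT⟩
      have hFeq : ∀ σ : ℝ, Kcmax * F k σ =
          ∑ j ∈ Finset.range (k + 1),
            ((k.choose j : ℝ) * Kmax ^ (k - j) * Kcmax ^ j / (j.factorial : ℝ) * Kcmax * E0)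
              * σ ^ j := by
        intro σ
        simp only [hF]
        rw [Finset.sum_mul, Finset.mul_sum]
        apply Finset.sum_congr rfl
        intro j _
        ring
      have hFint : IntervalIntegrable (fun σ => Kcmax * F k σ) MeasureTheory.volume 0 s := by
        apply Continuous.intervalIntegrable
        simp only [hFeq]
        exact continuous_finset_sum _ fun j _ => continuous_const.mul (continuous_pow j)
      have hbound : ∀ σ ∈ Set.Icc (0:ℝ) s,
          ‖(Kc (k+1) σ).mulVec (e k σ)‖ ≤ Kcmax * F k σ := by
        intro σ hσ
        have hσt : σ ∈ Set.Icc (0:ℝ) t := ⟨hσ.1, hσ.2.trans hst⟩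
        calc ‖(Kc (k+1) σ).mulVec (e k σ)‖ ≤ ‖Kc (k+1) σ‖ * ‖e k σ‖ :=
              Matrix.linfty_opNorm_mulVec _ _
          _ ≤ Kcmax * F k σ :=
              mul_le_mul (hKc _ _ hσt) (ih σ hσt) (norm_nonneg _) hKc0
      have hIbound : ‖∫ σ in (0:ℝ)..s, (Kc (k+1) σ).mulVec (e k σ)‖ ≤
          ∫ σ in (0:ℝ)..s, Kcmax * F k σ := by
        refine le_trans (norm_integral_le_integral_norm hs0) ?_
        apply intervalIntegral.integral_mono_on hs0 (hint k s hsT).norm hFint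
        intro σ hσ
        exact hbound σ hσ
      have hIval : (∫ σ in (0:ℝ)..s, Kcmax * F k σ) =
          (∑ j ∈ Finset.range (k + 1),
            (k.choose j : ℝ) * Kmax ^ (k - j) * Kcmax ^ (j+1) * s ^ (j+1) /
              ((j+1).factorial : ℝ)) * E0 := by
        simp only [hFeq]
        rw [intervalIntegral.integral_finset_sum (f := fun j (σ : ℝ) => (k.choose j : ℝ) *
            Kmax ^ (k - j) * Kcmax ^ j / (j.factorial : ℝ) * Kcmax * E0 * σ ^ j)
          (fun j _ => ((continuous_const.mul (continuous_pow j)).intervalIntegrable 0 s :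
            IntervalIntegrable (fun σ : ℝ => (k.choose j : ℝ) * Kmax ^ (k - j) * Kcmax ^ j /
              (j.factorial : ℝ) * Kcmax * E0 * σ ^ j) MeasureTheory.volume 0 s))]
        rw [Finset.sum_mul]
        apply Finset.sum_congr rfl
        intro j _
        rw [intervalIntegral.integral_const_mul, integral_pow]
        have hfac : ((j+1).factorial : ℝ) = (j+1) * (j.factorial : ℝ) := by
          exact_mod_cast Nat.factorial_succ j
        have hj1 : ((j:ℝ)+1) ≠ 0 := by positivity
        have hjf : (j.factorial : ℝ) ≠ 0 := by positivity
        rw [hfac]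
        push_cast
        field_simp
        ring
      calc ‖e (k+1) s‖ = ‖(K (k+1) s).mulVec (e k s) +
            ∫ σ in (0:ℝ)..s, (Kc (k+1) σ).mulVec (e k σ)‖ := by rw [hrec k s hsT]
        _ ≤ ‖(K (k+1) s).mulVec (e k s)‖ +
            ‖∫ σ in (0:ℝ)..s, (Kc (k+1) σ).mulVec (e k σ)‖ := norm_add_le _ _
        _ ≤ Kmax * F k s + ∫ σ in (0:ℝ)..s, Kcmax * F k σ := by
            apply add_le_add _ hIbound
            calc ‖(K (k+1) s).mulVec (e k s)‖ ≤ ‖K (k+1) s‖ * ‖e k s‖ :=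
                  Matrix.linfty_opNorm_mulVec _ _
              _ ≤ Kmax * F k s :=
                  mul_le_mul (hK _ _ ⟨hs0, hst⟩) (ih s ⟨hs0, hst⟩) (norm_nonneg _) hKm0
        _ = F (k+1) s := by
            rw [hIval, hF]
            simp only []
            rw [wr_aux_id Kmax Kcmax s k]
            ring
  intro k s hs
  refine le_trans (key k s hs) ?_
  simp only [hF]
  apply mul_le_mul_of_nonneg_right _ hE00
  apply Finset.sum_le_sum
  intro j _
  have h1 : s ^ j ≤ t ^ j := pow_le_pow_left₀ hs.1 hs.2 j
  have hfac : (0:ℝ) < (j.factorial : ℝ) := by exact_mod_cast j.factorial_pos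
  rw [div_le_div_iff_of_pos_right hfac]
  have h2 : (0:ℝ) ≤ (k.choose j : ℝ) * Kmax ^ (k - j) * Kcmax ^ j := by
    have := pow_nonneg hKm0 (k-j)
    have := pow_nonneg hKc0 j
    positivity
  exact mul_le_mul_of_nonneg_left h1 h2
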